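/- The universal Heisenberg-algebra invariant of the positive trefoil equals the reciprocal of its Alexander polynomial: for the long positive trefoil diagram T (closure of the 2-strand braid with 3 positive crossings), Z̃(T) = 1/(1 - T + T²), computed as the contraction ⟨e^{(T-1)(p_i - p_j)(-T x_i + (1+T²) x_j)} · e^{(π_i+π_j)p_0 + (ξ_i+ξ_j)x_0 - ξ_i π_j}⟩ over the pairs indexed by i and j. -/

import Mathlib

noncomputable section

/-- The scalar ring `K = ℚ[[t]]`. -/
abbrev Kt : Type := PowerSeries ℚ

/-- `T = e^{-t} ∈ ℚ[[t]]`. -/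
def Tser : Kt := PowerSeries.mk fun n => ((-1 : ℚ)) ^ n * ((n.factorial : ℚ))⁻¹

/-- `T⁻¹ = e^{t} ∈ ℚ[[t]]`. -/
def TserInv : Kt := PowerSeries.mk fun n => ((n.factorial : ℚ))⁻¹

/-- Variables: contracted Latin variables `p_1, x_1, p_2, x_2` (first summand,
`(strand, false) = p`, `(strand, true) = x`), Greek variables `π_1, ξ_1, π_2, ξ_2`
(second summand), and output Latin variables `p_0, x_0` (third summand). -/
abbrev VAll : Type := (Fin 2 × Bool) ⊕ (Fin 2 × Bool) ⊕ Bool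

/-- The ambient ring for the contraction computation. -/
abbrev SAll : Type := MvPowerSeries VAll Kt

/-- The exponential `e^E = Σ_k E^k / k!` of an element with zero constant term,
computed coefficientwise. -/
def expK {σ : Type*} (E : MvPowerSeries σ Kt) : MvPowerSeries σ Kt :=
  fun m => ∑ k ∈ Finset.range (m.sum (fun _ e => e) + 1),
    ((k.factorial : ℚ)⁻¹) • MvPowerSeries.coeff (R := Kt) m (E ^ k)

/-- The multi-index factorial. -/
def mfact {J : Type*} (n : J →₀ ℕ) : ℕ := n.prod fun _ k => k.factorial

/-- The contraction slice: the coefficient of (Latin)`^k`·(Greek)`^k` in `h`, as a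
power series in the output variables `p_0, x_0`. -/
def sliceC (k : (Fin 2 × Bool) →₀ ℕ) (h : SAll) : MvPowerSeries Bool Kt :=
  fun u => MvPowerSeries.coeff (R := Kt)
    (k.mapDomain Sum.inl + k.mapDomain (fun v => Sum.inr (Sum.inl v)) +
      u.mapDomain (fun w => Sum.inr (Sum.inr w))) h

/-- The `t`-adic (coefficientwise) topology on `ℚ[[t]]`. -/
def KtTop : TopologicalSpace Kt :=
  @Pi.topologicalSpace (Unit →₀ ℕ) (fun _ => ℚ) (fun _ => ⊥)

/-- The coefficientwise topology on the output ring. -/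
def outTop : TopologicalSpace (MvPowerSeries Bool Kt) :=
  @Pi.topologicalSpace (Bool →₀ ℕ) (fun _ => Kt) (fun _ => KtTop)

/-- The exponent
`(T-1)(p_i-p_j)(-T x_i + (1+T²) x_j) + (π_i+π_j)p_0 + (ξ_i+ξ_j)x_0 - ξ_iπ_j`
(with `i = 0`, `j = 1`), whose exponential is the value of the 2-strand braid with
three positive crossings multiplied by the closing merge `m^{ij}_0`. -/
def E9 : SAll :=
  MvPowerSeries.C (σ := VAll) (R := Kt) (Tser - 1) *
      (MvPowerSeries.X (Sum.inl (0, false)) - MvPowerSeries.X (Sum.inl (1, false))) *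
      (MvPowerSeries.C (σ := VAll) (R := Kt) (-Tser) * MvPowerSeries.X (Sum.inl (0, true)) +
        MvPowerSeries.C (σ := VAll) (R := Kt) (1 + Tser ^ 2) * MvPowerSeries.X (Sum.inl (1, true))) +
    (MvPowerSeries.X (Sum.inr (Sum.inl (0, false))) +
        MvPowerSeries.X (Sum.inr (Sum.inl (1, false)))) *
      MvPowerSeries.X (Sum.inr (Sum.inr false)) +
    (MvPowerSeries.X (Sum.inr (Sum.inl (0, true))) +
        MvPowerSeries.X (Sum.inr (Sum.inl (1, true)))) *
      MvPowerSeries.X (Sum.inr (Sum.inr true)) -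
    MvPowerSeries.X (Sum.inr (Sum.inl (0, true))) *
      MvPowerSeries.X (Sum.inr (Sum.inl (1, false)))

namespace Trefoil
set_option maxHeartbeats 1600000
open MvPowerSeries Finset

abbrev vp1 : VAll := Sum.inl (0, false)
abbrev vx1 : VAll := Sum.inl (0, true)
abbrev vp2 : VAll := Sum.inl (1, false)
abbrev vx2 : VAll := Sum.inl (1, true)
abbrev gp1 : VAll := Sum.inr (Sum.inl (0, false))
abbrev gx1 : VAll := Sum.inr (Sum.inl (0, true))
abbrev gp2 : VAll := Sum.inr (Sum.inl (1, false))
abbrev gx2 : VAll := Sum.inr (Sum.inl (1, true))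
abbrev z0 : VAll := Sum.inr (Sum.inr false)
abbrev z1 : VAll := Sum.inr (Sum.inr true)

local notation "KC" => MvPowerSeries.C (σ := VAll) (R := Kt)
local notation "KM" => MvPowerSeries.monomial (σ := VAll) (R := Kt)
local notation "KX" => (MvPowerSeries.X : VAll → SAll)

lemma C_mul_monomial' (a r : Kt) (d : VAll →₀ ℕ) :
    KC a * KM d r = KM d (a * r) := by
  rw [← monomial_zero_eq_C_apply, monomial_mul_monomial, zero_add]

lemma pow_two_lin (α β : Kt) (uu vv : VAll) (n : ℕ) :
    (KC α * KX uu + KC β * KX vv) ^ n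
      = ∑ a ∈ range (n + 1),
          KM (Finsupp.single uu a + Finsupp.single vv (n - a))
            ((n.choose a : Kt) * (α ^ a * β ^ (n - a))) := by
  rw [add_pow]
  refine Finset.sum_congr rfl fun a _ => ?_
  rw [mul_pow, mul_pow, ← map_pow, ← map_pow, X_pow_eq, X_pow_eq,
    C_mul_monomial', C_mul_monomial', monomial_mul_monomial]
  have : ((n.choose a : ℕ) : SAll) = KC ((n.choose a : ℕ) : Kt) := by
    rw [map_natCast]
  rw [this, mul_comm _ (KC _), C_mul_monomial']
  congr 1
  ring


/-! ### Atom power expansions -/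

lemma KM_zero (d : VAll →₀ ℕ) : KM d (0 : Kt) = 0 := map_zero _

lemma pow_two_lin' (α β : Kt) (uu vv : VAll) {n NN : ℕ} (h : n ≤ NN) :
    (KC α * KX uu + KC β * KX vv) ^ n
      = ∑ a ∈ range (NN + 1),
          KM (Finsupp.single uu a + Finsupp.single vv (n - a))
            ((n.choose a : Kt) * (α ^ a * β ^ (n - a))) := by
  rw [pow_two_lin]
  refine Finset.sum_subset ?_ ?_
  · exact Finset.range_subset_range.2 (by omega)
  · intro a _ ha
    have : n < a := by simpa using ha
    rw [Nat.choose_eq_zero_of_lt this]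
    push_cast
    rw [zero_mul, KM_zero]

lemma X_add_X_pow (uu vv : VAll) {n NN : ℕ} (h : n ≤ NN) :
    (KX uu + KX vv) ^ n
      = ∑ a ∈ range (NN + 1),
          KM (Finsupp.single uu a + Finsupp.single vv (n - a)) (n.choose a : Kt) := by
  have h1 : (KX uu + KX vv) = KC 1 * KX uu + KC 1 * KX vv := by
    rw [map_one, one_mul, one_mul]
  rw [h1, pow_two_lin' 1 1 uu vv h]
  exact Finset.sum_congr rfl fun a _ => by rw [one_pow, one_pow, mul_one, mul_one]

lemma X_sub_X_pow (uu vv : VAll) {n NN : ℕ} (h : n ≤ NN) :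
    (KX uu - KX vv) ^ n
      = ∑ a ∈ range (NN + 1),
          KM (Finsupp.single uu a + Finsupp.single vv (n - a))
            ((n.choose a : Kt) * (-1 : Kt) ^ (n - a)) := by
  have h1 : (KX uu - KX vv) = KC 1 * KX uu + KC (-1) * KX vv := by
    rw [map_one, map_neg, map_one, one_mul]; ring
  rw [h1, pow_two_lin' 1 (-1) uu vv h]
  exact Finset.sum_congr rfl fun a _ => by rw [one_pow, one_mul]

lemma X_mul_X_pow (uu vv : VAll) (n : ℕ) :
    (KX uu * KX vv) ^ n
      = KM (Finsupp.single uu n + Finsupp.single vv n) (1 : Kt) := by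
  rw [mul_pow, X_pow_eq, X_pow_eq, monomial_mul_monomial, one_mul]

/-- scaling a `KM`-sum by a constant -/
lemma KC_mul_sum {ι : Type*} (s : Finset ι) (c : Kt) (d : ι → VAll →₀ ℕ) (r : ι → Kt) :
    KC c * ∑ x ∈ s, KM (d x) (r x) = ∑ x ∈ s, KM (d x) (c * r x) := by
  rw [Finset.mul_sum]
  exact Finset.sum_congr rfl fun x _ => C_mul_monomial' _ _ _

lemma sum_mul_sum_KM {ι κ' : Type*} (s : Finset ι) (t : Finset κ')
    (d1 : ι → VAll →₀ ℕ) (r1 : ι → Kt) (d2 : κ' → VAll →₀ ℕ) (r2 : κ' → Kt) :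
    (∑ x ∈ s, KM (d1 x) (r1 x)) * (∑ y ∈ t, KM (d2 y) (r2 y))
      = ∑ x ∈ s, ∑ y ∈ t, KM (d1 x + d2 y) (r1 x * r2 y) := by
  rw [Finset.sum_mul_sum]
  exact Finset.sum_congr rfl fun x _ =>
    Finset.sum_congr rfl fun y _ => monomial_mul_monomial _ _ _ _
/-! ### The four atoms of `E9` -/

def AA : SAll :=
  KC (Tser - 1) * (KX vp1 - KX vp2) * (KC (-Tser) * KX vx1 + KC (1 + Tser ^ 2) * KX vx2)
def YY1 : SAll := (KX gp1 + KX gp2) * KX z0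
def YY2 : SAll := (KX gx1 + KX gx2) * KX z1
def YY3 : SAll := KX gx1 * KX gp2

lemma E9_eq : E9 = (AA + YY1) + (YY2 - YY3) := by
  unfold E9 AA YY1 YY2 YY3; ring

lemma KM_mul_KM (d e : VAll →₀ ℕ) (r s : Kt) :
    KM d r * KM e s = KM (d + e) (r * s) := monomial_mul_monomial _ _ _ _

lemma KM_mul_nat (d : VAll →₀ ℕ) (r : Kt) (n : ℕ) :
    KM d r * (n : SAll) = KM d (r * n) := by
  have : ((n : ℕ) : SAll) = KC ((n : ℕ) : Kt) := by rw [map_natCast]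
  rw [this, mul_comm, C_mul_monomial', mul_comm]

lemma AA_pow {i NN : ℕ} (h : i ≤ NN) :
    AA ^ i = ∑ a ∈ range (NN + 1), ∑ β ∈ range (NN + 1),
      KM ((Finsupp.single vp1 a + Finsupp.single vp2 (i - a)) +
          (Finsupp.single vx1 β + Finsupp.single vx2 (i - β)))
        ((Tser - 1) ^ i * ((i.choose a : Kt) * (-1 : Kt) ^ (i - a)) *
          ((i.choose β : Kt) * ((-Tser) ^ β * (1 + Tser ^ 2) ^ (i - β)))) := by
  unfold AA
  rw [mul_pow, mul_pow, ← map_pow, X_sub_X_pow vp1 vp2 h,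
    pow_two_lin' (-Tser) (1 + Tser ^ 2) vx1 vx2 h, mul_assoc, sum_mul_sum_KM, Finset.mul_sum]
  refine Finset.sum_congr rfl fun a _ => ?_
  rw [Finset.mul_sum]
  refine Finset.sum_congr rfl fun b _ => ?_
  rw [C_mul_monomial']
  congr 1
  ring

lemma YY1_pow {j NN : ℕ} (h : j ≤ NN) :
    YY1 ^ j = ∑ a' ∈ range (NN + 1),
      KM ((Finsupp.single gp1 a' + Finsupp.single gp2 (j - a')) + Finsupp.single z0 j)
        (j.choose a' : Kt) := by
  unfold YY1
  rw [mul_pow, X_add_X_pow gp1 gp2 h, X_pow_eq, Finset.sum_mul]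
  refine Finset.sum_congr rfl fun a' _ => ?_
  rw [KM_mul_KM, mul_one]

lemma negYY3_pow (m : ℕ) :
    (-YY3) ^ m = KM (Finsupp.single gx1 m + Finsupp.single gp2 m) ((-1 : Kt) ^ m) := by
  unfold YY3
  rw [neg_pow, X_mul_X_pow]
  have : ((-1 : SAll)) ^ m = KC ((-1 : Kt) ^ m) := by
    rw [map_pow, map_neg, map_one]
  rw [this, C_mul_monomial', mul_one]
lemma YY2_pow {l NN : ℕ} (h : l ≤ NN) :
    YY2 ^ l = ∑ c' ∈ range (NN + 1),
      KM ((Finsupp.single gx1 c' + Finsupp.single gx2 (l - c')) + Finsupp.single z1 l)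
        (l.choose c' : Kt) := by
  unfold YY2
  rw [mul_pow, X_add_X_pow gx1 gx2 h, X_pow_eq, Finset.sum_mul]
  refine Finset.sum_congr rfl fun c' _ => ?_
  rw [KM_mul_KM, mul_one]

def DU (m i a β a' : ℕ) : VAll →₀ ℕ :=
  ((Finsupp.single vp1 a + Finsupp.single vp2 (i - a)) +
      (Finsupp.single vx1 β + Finsupp.single vx2 (i - β))) +
    ((Finsupp.single gp1 a' + Finsupp.single gp2 (m - i - a')) + Finsupp.single z0 (m - i))

def rU (m i a β a' : ℕ) : Kt :=
  (Tser - 1) ^ i * ((i.choose a : Kt) * (-1 : Kt) ^ (i - a)) *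
      ((i.choose β : Kt) * ((-Tser) ^ β * (1 + Tser ^ 2) ^ (i - β))) *
    ((m - i).choose a' : Kt) * (m.choose i : Kt)

lemma U_pow {m NN : ℕ} (h : m ≤ NN) :
    (AA + YY1) ^ m = ∑ i ∈ range (NN + 1), ∑ a' ∈ range (NN + 1), ∑ a ∈ range (NN + 1),
      ∑ β ∈ range (NN + 1), KM (DU m i a β a') (rU m i a β a') := by
  rw [add_pow]
  have step : ∀ i ∈ range (m + 1),
      AA ^ i * YY1 ^ (m - i) * ((m.choose i : ℕ) : SAll)
        = ∑ a' ∈ range (NN + 1), ∑ a ∈ range (NN + 1), ∑ β ∈ range (NN + 1),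
            KM (DU m i a β a') (rU m i a β a') := by
    intro i hi
    have hii : i ≤ NN := le_trans (by simpa [Nat.lt_succ_iff] using hi) h
    rw [AA_pow hii, YY1_pow (show m - i ≤ NN by omega)]
    simp only [Finset.sum_mul, Finset.mul_sum, KM_mul_KM, KM_mul_nat]
    unfold DU rU
    refine Finset.sum_congr rfl fun a' _ => Finset.sum_congr rfl fun a _ =>
      Finset.sum_congr rfl fun β _ => rfl
  rw [Finset.sum_congr rfl step]
  refine Finset.sum_subset (Finset.range_subset_range.2 (by omega)) ?_
  intro i _ hi
  have : m < i := by simpa using hi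
  unfold rU
  simp [Nat.choose_eq_zero_of_lt this]

def DV (m l c' : ℕ) : VAll →₀ ℕ :=
  ((Finsupp.single gx1 c' + Finsupp.single gx2 (l - c')) + Finsupp.single z1 l) +
    (Finsupp.single gx1 (m - l) + Finsupp.single gp2 (m - l))

def rV (m l c' : ℕ) : Kt :=
  (l.choose c' : Kt) * (-1 : Kt) ^ (m - l) * (m.choose l : Kt)

lemma V_pow {m NN : ℕ} (h : m ≤ NN) :
    (YY2 - YY3) ^ m = ∑ l ∈ range (NN + 1), ∑ c' ∈ range (NN + 1),
      KM (DV m l c') (rV m l c') := by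
  rw [sub_eq_add_neg, add_pow]
  have step : ∀ l ∈ range (m + 1),
      YY2 ^ l * (-YY3) ^ (m - l) * ((m.choose l : ℕ) : SAll)
        = ∑ c' ∈ range (NN + 1), KM (DV m l c') (rV m l c') := by
    intro l hl
    rw [YY2_pow (le_trans (by simpa [Nat.lt_succ_iff] using hl) h), negYY3_pow]
    simp only [Finset.sum_mul, KM_mul_KM, KM_mul_nat]
    unfold DV rV
    refine Finset.sum_congr rfl fun c' _ => ?_
    congr 1
  rw [Finset.sum_congr rfl step]
  refine Finset.sum_subset (Finset.range_subset_range.2 (by omega)) ?_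
  intro l _ hl
  have : m < l := by simpa using hl
  unfold rV
  simp [Nat.choose_eq_zero_of_lt this]
def DD (κ m1 i l a β a' c' : ℕ) : VAll →₀ ℕ := DU m1 i a β a' + DV (κ - m1) l c'

def rr (κ m1 i l a β a' c' : ℕ) : Kt :=
  rU m1 i a β a' * rV (κ - m1) l c' * (κ.choose m1 : Kt)

lemma E9_pow_exp (κ : ℕ) :
    E9 ^ κ = ∑ m1 ∈ range (κ + 1), ∑ l ∈ range (κ + 1), ∑ c' ∈ range (κ + 1),
      ∑ i ∈ range (κ + 1), ∑ a' ∈ range (κ + 1), ∑ a ∈ range (κ + 1), ∑ β ∈ range (κ + 1),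
        KM (DD κ m1 i l a β a' c') (rr κ m1 i l a β a' c') := by
  rw [E9_eq, add_pow]
  refine Finset.sum_congr rfl fun m1 hm1 => ?_
  have h1 : m1 ≤ κ := by simpa [Nat.lt_succ_iff] using hm1
  rw [U_pow h1, V_pow (show κ - m1 ≤ κ by omega)]
  simp only [Finset.sum_mul, Finset.mul_sum, KM_mul_KM, KM_mul_nat]
  unfold DD rr
  rfl
/-! ### The slice monomial and coordinates -/

def MM (k : (Fin 2 × Bool) →₀ ℕ) (u : Bool →₀ ℕ) : VAll →₀ ℕ :=
  k.mapDomain Sum.inl + k.mapDomain (fun v => Sum.inr (Sum.inl v)) +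
    u.mapDomain (fun w => Sum.inr (Sum.inr w))

lemma MM_apply_L (k : (Fin 2 × Bool) →₀ ℕ) (u : Bool →₀ ℕ) (p : Fin 2 × Bool) :
    MM k u (Sum.inl p) = k p := by
  unfold MM
  rw [Finsupp.add_apply, Finsupp.add_apply,
    Finsupp.mapDomain_apply Sum.inl_injective,
    Finsupp.mapDomain_notin_range _ _ (by simp),
    Finsupp.mapDomain_notin_range _ _ (by simp)]
  omega

lemma MM_apply_G (k : (Fin 2 × Bool) →₀ ℕ) (u : Bool →₀ ℕ) (p : Fin 2 × Bool) :
    MM k u (Sum.inr (Sum.inl p)) = k p := by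
  unfold MM
  rw [Finsupp.add_apply, Finsupp.add_apply,
    Finsupp.mapDomain_apply (fun x y h => by
      simpa using h : Function.Injective (fun v : Fin 2 × Bool => (Sum.inr (Sum.inl v) : VAll))),
    Finsupp.mapDomain_notin_range _ _ (by simp),
    Finsupp.mapDomain_notin_range _ _ (by simp)]
  omega

lemma MM_apply_O (k : (Fin 2 × Bool) →₀ ℕ) (u : Bool →₀ ℕ) (b : Bool) :
    MM k u (Sum.inr (Sum.inr b)) = u b := by
  unfold MM
  rw [Finsupp.add_apply, Finsupp.add_apply,
    Finsupp.mapDomain_apply (fun x y h => by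
      simpa using h : Function.Injective (fun w : Bool => (Sum.inr (Sum.inr w) : VAll))),
    Finsupp.mapDomain_notin_range _ _ (by simp),
    Finsupp.mapDomain_notin_range _ _ (by simp)]
  omega

/-- all ten coordinates of `DD` -/
lemma DD_apply (κ m1 i l a β a' c' : ℕ) :
    DD κ m1 i l a β a' c' vp1 = a ∧ DD κ m1 i l a β a' c' vp2 = i - a ∧
    DD κ m1 i l a β a' c' vx1 = β ∧ DD κ m1 i l a β a' c' vx2 = i - β ∧
    DD κ m1 i l a β a' c' gp1 = a' ∧
    DD κ m1 i l a β a' c' gp2 = (m1 - i - a') + (κ - m1 - l) ∧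
    DD κ m1 i l a β a' c' gx1 = c' + (κ - m1 - l) ∧
    DD κ m1 i l a β a' c' gx2 = l - c' ∧
    DD κ m1 i l a β a' c' z0 = m1 - i ∧ DD κ m1 i l a β a' c' z1 = l := by
  unfold DD DU DV
  refine ⟨?_, ?_, ?_, ?_, ?_, ?_, ?_, ?_, ?_, ?_⟩ <;>
    simp [Finsupp.single_apply]
/-! ### Degree, conditions, master extraction -/

lemma degMM (k : (Fin 2 × Bool) →₀ ℕ) (u : Bool →₀ ℕ) :
    (MM k u).sum (fun _ e => e)
      = (k (0,false) + k (0,true) + k (1,false) + k (1,true)) * 2 + (u false + u true) := by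
  rw [Finsupp.sum_fintype _ _ (fun _ => rfl)]
  rw [Fintype.sum_sum_type, Fintype.sum_sum_type]
  simp only [MM_apply_L, MM_apply_G, MM_apply_O, Fintype.sum_prod_type, Fin.sum_univ_two,
    Fintype.sum_bool]
  omega

def Cond (k : (Fin 2 × Bool) →₀ ℕ) (u : Bool →₀ ℕ) : Prop :=
  k (0,false) + k (1,false) = k (0,true) + k (1,true) ∧ k (0,false) ≤ u false ∧
  k (1,true) ≤ u true ∧ u false ≤ k (0,false) + k (1,false) ∧ u false = u true

lemma master {k : (Fin 2 × Bool) →₀ ℕ} {u : Bool →₀ ℕ} {κ m1 i l a β a' c' : ℕ}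
    (h : MM k u = DD κ m1 i l a β a' c') (hr : rr κ m1 i l a β a' c' ≠ 0) :
    κ = 2*(k (0,false) + k (1,false)) + u false ∧
    m1 = (k (0,false) + k (1,false)) + u false ∧ l = u true ∧ c' = u true - k (1,true) ∧
    i = k (0,false) + k (1,false) ∧ a' = k (0,false) ∧ a = k (0,false) ∧ β = k (0,true) ∧
    Cond k u := by
  unfold rr rU rV at hr
  have b1 : a ≤ i := by
    by_contra hh; push_neg at hh; apply hr; rw [Nat.choose_eq_zero_of_lt hh]; push_cast; ring
  have b2 : β ≤ i := by
    by_contra hh; push_neg at hh; apply hr; rw [Nat.choose_eq_zero_of_lt hh]; push_cast; ring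
  have b3 : a' ≤ m1 - i := by
    by_contra hh; push_neg at hh; apply hr; rw [Nat.choose_eq_zero_of_lt hh]; push_cast; ring
  have b4 : i ≤ m1 := by
    by_contra hh; push_neg at hh; apply hr; rw [Nat.choose_eq_zero_of_lt hh]; push_cast; ring
  have b5 : c' ≤ l := by
    by_contra hh; push_neg at hh; apply hr; rw [Nat.choose_eq_zero_of_lt hh]; push_cast; ring
  have b6 : l ≤ κ - m1 := by
    by_contra hh; push_neg at hh; apply hr; rw [Nat.choose_eq_zero_of_lt hh]; push_cast; ring
  have b7 : m1 ≤ κ := by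
    by_contra hh; push_neg at hh; apply hr; rw [Nat.choose_eq_zero_of_lt hh]; push_cast; ring
  obtain ⟨d1, d2, d3, d4, d5, d6, d7, d8, d9, d10⟩ := DD_apply κ m1 i l a β a' c'
  have e1 := DFunLike.congr_fun h vp1; rw [MM_apply_L, d1] at e1
  have e2 := DFunLike.congr_fun h vp2; rw [MM_apply_L, d2] at e2
  have e3 := DFunLike.congr_fun h vx1; rw [MM_apply_L, d3] at e3
  have e4 := DFunLike.congr_fun h vx2; rw [MM_apply_L, d4] at e4
  have e5 := DFunLike.congr_fun h gp1; rw [MM_apply_G, d5] at e5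
  have e6 := DFunLike.congr_fun h gp2; rw [MM_apply_G, d6] at e6
  have e7 := DFunLike.congr_fun h gx1; rw [MM_apply_G, d7] at e7
  have e8 := DFunLike.congr_fun h gx2; rw [MM_apply_G, d8] at e8
  have e9 := DFunLike.congr_fun h z0; rw [MM_apply_O, d9] at e9
  have e10 := DFunLike.congr_fun h z1; rw [MM_apply_O, d10] at e10
  unfold Cond
  omega

lemma MM_eq_DD_tau0 {k : (Fin 2 × Bool) →₀ ℕ} {u : Bool →₀ ℕ} (hC : Cond k u) :
    MM k u = DD (2*(k (0,false) + k (1,false)) + u false)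
      ((k (0,false) + k (1,false)) + u false) (k (0,false) + k (1,false)) (u true)
      (k (0,false)) (k (0,true)) (k (0,false)) (u true - k (1,true)) := by
  obtain ⟨hc1, hc2, hc3, hc4, hc5⟩ := hC
  ext v
  rcases v with ⟨s, b⟩ | p
  · fin_cases s <;> cases b <;>
      (rw [MM_apply_L] <;> simp [DD, DU, DV, Finsupp.single_apply]) <;> omega
  · rcases p with ⟨s, b⟩ | b
    · fin_cases s <;> cases b <;>
        (rw [MM_apply_G] <;> simp [DD, DU, DV, Finsupp.single_apply]) <;> omega
    · cases b <;>
        (rw [MM_apply_O] <;> simp [DD, DU, DV, Finsupp.single_apply]) <;> omega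
/-! ### The coefficient of `expK E9` at a slice monomial -/

lemma coeff_expK (E : SAll) (m : VAll →₀ ℕ) :
    MvPowerSeries.coeff (R := Kt) m (expK E)
      = ∑ κ ∈ range (m.sum (fun _ e => e) + 1),
          ((κ.factorial : ℚ)⁻¹) • MvPowerSeries.coeff (R := Kt) m (E ^ κ) := rfl

def val (k : (Fin 2 × Bool) →₀ ℕ) (u : Bool →₀ ℕ) : Kt :=
  (((2*(k (0,false) + k (1,false)) + u false).factorial : ℚ))⁻¹ •
    rr (2*(k (0,false) + k (1,false)) + u false) ((k (0,false) + k (1,false)) + u false)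
      (k (0,false) + k (1,false)) (u true) (k (0,false)) (k (0,true)) (k (0,false))
      (u true - k (1,true))

lemma atom_eq_zero {k : (Fin 2 × Bool) →₀ ℕ} {u : Bool →₀ ℕ} {κ m1 i l a β a' c' : ℕ}
    (hno : ¬(κ = 2*(k (0,false) + k (1,false)) + u false ∧
      m1 = (k (0,false) + k (1,false)) + u false ∧ l = u true ∧ c' = u true - k (1,true) ∧
      i = k (0,false) + k (1,false) ∧ a' = k (0,false) ∧ a = k (0,false) ∧ β = k (0,true) ∧
      Cond k u)) :
    (if MM k u = DD κ m1 i l a β a' c' then rr κ m1 i l a β a' c' else 0) = 0 := by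
  split_ifs with h
  · rcases eq_or_ne (rr κ m1 i l a β a' c') 0 with h0 | h0
    · exact h0
    · exact absurd (master h h0) hno
  · rfl

open Classical in
lemma coeff_expK_E9 (k : (Fin 2 × Bool) →₀ ℕ) (u : Bool →₀ ℕ) :
    MvPowerSeries.coeff (R := Kt) (MM k u) (expK E9) = if Cond k u then val k u else 0 := by
  rw [coeff_expK]
  simp only [E9_pow_exp, map_sum, coeff_monomial]
  by_cases hC : Cond k u
  · rw [if_pos hC]
    have hc' := hC
    obtain ⟨hc1, hc2, hc3, hc4, hc5⟩ := hc'
    rw [Finset.sum_eq_single_of_mem (2*(k (0,false) + k (1,false)) + u false)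
      (by simp only [Finset.mem_range, degMM]; omega)
      (fun b _ hb => by
        rw [Finset.sum_eq_zero fun m1 _ => Finset.sum_eq_zero fun l _ =>
          Finset.sum_eq_zero fun c' _ => Finset.sum_eq_zero fun i _ =>
          Finset.sum_eq_zero fun a' _ => Finset.sum_eq_zero fun a _ =>
          Finset.sum_eq_zero fun β _ => atom_eq_zero (fun hh => hb hh.1), smul_zero])]
    rw [Finset.sum_eq_single_of_mem ((k (0,false) + k (1,false)) + u false)
      (by simp only [Finset.mem_range]; omega)
      (fun b _ hb => Finset.sum_eq_zero fun l _ =>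
          Finset.sum_eq_zero fun c' _ => Finset.sum_eq_zero fun i _ =>
          Finset.sum_eq_zero fun a' _ => Finset.sum_eq_zero fun a _ =>
          Finset.sum_eq_zero fun β _ => atom_eq_zero (fun hh => hb hh.2.1))]
    rw [Finset.sum_eq_single_of_mem (u true)
      (by simp only [Finset.mem_range]; omega)
      (fun b _ hb => Finset.sum_eq_zero fun c' _ => Finset.sum_eq_zero fun i _ =>
          Finset.sum_eq_zero fun a' _ => Finset.sum_eq_zero fun a _ =>
          Finset.sum_eq_zero fun β _ => atom_eq_zero (fun hh => hb hh.2.2.1))]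
    rw [Finset.sum_eq_single_of_mem (u true - k (1,true))
      (by simp only [Finset.mem_range]; omega)
      (fun b _ hb => Finset.sum_eq_zero fun i _ =>
          Finset.sum_eq_zero fun a' _ => Finset.sum_eq_zero fun a _ =>
          Finset.sum_eq_zero fun β _ => atom_eq_zero (fun hh => hb hh.2.2.2.1))]
    rw [Finset.sum_eq_single_of_mem (k (0,false) + k (1,false))
      (by simp only [Finset.mem_range]; omega)
      (fun b _ hb => Finset.sum_eq_zero fun a' _ => Finset.sum_eq_zero fun a _ =>
          Finset.sum_eq_zero fun β _ => atom_eq_zero (fun hh => hb hh.2.2.2.2.1))]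
    rw [Finset.sum_eq_single_of_mem (k (0,false))
      (by simp only [Finset.mem_range]; omega)
      (fun b _ hb => Finset.sum_eq_zero fun a _ =>
          Finset.sum_eq_zero fun β _ => atom_eq_zero (fun hh => hb hh.2.2.2.2.2.1))]
    rw [Finset.sum_eq_single_of_mem (k (0,false))
      (by simp only [Finset.mem_range]; omega)
      (fun b _ hb => Finset.sum_eq_zero fun β _ =>
        atom_eq_zero (fun hh => hb hh.2.2.2.2.2.2.1))]
    rw [Finset.sum_eq_single_of_mem (k (0,true))
      (by simp only [Finset.mem_range]; omega)
      (fun b _ hb => atom_eq_zero (fun hh => hb hh.2.2.2.2.2.2.2.1))]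
    rw [if_pos (MM_eq_DD_tau0 hC)]
    rfl
  · rw [if_neg hC]
    refine Finset.sum_eq_zero fun κ _ => ?_
    rw [Finset.sum_eq_zero fun m1 _ => Finset.sum_eq_zero fun l _ =>
      Finset.sum_eq_zero fun c' _ => Finset.sum_eq_zero fun i _ =>
      Finset.sum_eq_zero fun a' _ => Finset.sum_eq_zero fun a _ =>
      Finset.sum_eq_zero fun β _ => atom_eq_zero (fun hh => hC hh.2.2.2.2.2.2.2.2), smul_zero]
/-! ### Power series facts over `Kt` -/

lemma constantCoeff_Tser : PowerSeries.constantCoeff (R := ℚ) Tser = 1 := by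
  unfold Tser; rw [PowerSeries.constantCoeff_mk]; norm_num

lemma X_dvd_Tser_sub_one : (PowerSeries.X : Kt) ∣ (Tser - 1) := by
  rw [PowerSeries.X_dvd_iff, map_sub, constantCoeff_Tser, map_one, sub_self]

lemma coeff_w_pow_mul {n N : ℕ} (g : Kt) (h : N < n) :
    PowerSeries.coeff (R := ℚ) N ((Tser - 1) ^ n * g) = 0 := by
  have hd : (PowerSeries.X : Kt) ^ n ∣ (Tser - 1) ^ n * g :=
    Dvd.dvd.mul_right (pow_dvd_pow_of_dvd X_dvd_Tser_sub_one n) g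
  exact PowerSeries.X_pow_dvd_iff.mp hd N h

lemma constantCoeff_D : PowerSeries.constantCoeff (R := ℚ) (1 - Tser + Tser ^ 2) ≠ 0 := by
  rw [map_add, map_sub, map_one, map_pow, constantCoeff_Tser]
  norm_num

lemma coeff_q_pow_mul {n N : ℕ} (g : Kt) (h : N < n) :
    PowerSeries.coeff (R := ℚ) N ((Tser - Tser ^ 2) ^ n * g) = 0 := by
  rw [show Tser - Tser ^ 2 = (Tser - 1) * (-Tser) by ring, mul_pow, mul_assoc]
  exact coeff_w_pow_mul _ h

lemma geom_partial (N : ℕ) :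
    PowerSeries.coeff (R := ℚ) N (∑ m ∈ range (N + 1), (Tser - Tser ^ 2) ^ m)
      = PowerSeries.coeff (R := ℚ) N ((1 - Tser + Tser ^ 2)⁻¹) := by
  have hg := geom_sum_mul (Tser - Tser ^ 2) (N + 1)
  have hD : (∑ i ∈ range (N + 1), (Tser - Tser ^ 2) ^ i) * (1 - Tser + Tser ^ 2)
      = 1 - (Tser - Tser ^ 2) ^ (N + 1) := by
    have : (1 : Kt) - Tser + Tser ^ 2 = -((Tser - Tser ^ 2) - 1) := by ring
    rw [this, mul_neg, hg]; ring
  have hS : (∑ i ∈ range (N + 1), (Tser - Tser ^ 2) ^ i)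
      = (1 - Tser + Tser ^ 2)⁻¹ - (Tser - Tser ^ 2) ^ (N + 1) * (1 - Tser + Tser ^ 2)⁻¹ := by
    have h2 := congrArg (· * (1 - Tser + Tser ^ 2)⁻¹) hD
    rw [mul_assoc, PowerSeries.mul_inv_cancel _ constantCoeff_D, mul_one] at h2
    rw [h2]; ring
  rw [hS, map_sub, coeff_q_pow_mul _ (by omega), sub_zero]

lemma alt_sum_choose_Kt {e : ℕ} (he : e ≠ 0) :
    ∑ a ∈ range (e + 1), (-1 : Kt) ^ a * (e.choose a : Kt) = 0 := by
  have h := Int.alternating_sum_range_choose_of_ne he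
  have := congrArg (fun z : ℤ => (z : Kt)) h
  push_cast at this
  simpa using this

lemma neg_one_pow_sub {m n : ℕ} (h : m ≤ n) :
    ((-1 : Kt)) ^ (n - m) = (-1) ^ n * (-1) ^ m := by
  have h1 : ((-1 : Kt)) ^ (n - m) * ((-1) ^ m * (-1) ^ m) = (-1) ^ (n - m) := by
    rw [← mul_pow]; norm_num
  calc ((-1 : Kt)) ^ (n - m) = (-1) ^ (n - m) * ((-1) ^ m * (-1) ^ m) := h1.symm
    _ = ((-1) ^ (n - m) * (-1) ^ m) * (-1) ^ m := by ring
    _ = (-1) ^ n * (-1) ^ m := by rw [← pow_add]; congr 2; omega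
/-! ### The box of relevant `k`'s -/

lemma mfact_eq (k : (Fin 2 × Bool) →₀ ℕ) :
    mfact k = (k (0,false)).factorial * (k (0,true)).factorial *
      (k (1,false)).factorial * (k (1,true)).factorial := by
  unfold mfact
  rw [Finsupp.prod_fintype _ _ (fun _ => rfl)]
  rw [Fintype.prod_prod_type]
  rw [Fin.prod_univ_two]
  simp only [Fintype.prod_bool]
  ring

def φk (t : ℕ × ℕ × ℕ × ℕ) : (Fin 2 × Bool) →₀ ℕ :=
  Finsupp.single (0,false) t.1 + Finsupp.single (0,true) t.2.1 +
    Finsupp.single (1,false) t.2.2.1 + Finsupp.single (1,true) t.2.2.2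

lemma φk_apply (t : ℕ × ℕ × ℕ × ℕ) :
    φk t (0,false) = t.1 ∧ φk t (0,true) = t.2.1 ∧ φk t (1,false) = t.2.2.1 ∧
      φk t (1,true) = t.2.2.2 := by
  unfold φk
  refine ⟨?_, ?_, ?_, ?_⟩ <;> simp [Finsupp.single_apply]

lemma k_eq_φk (k : (Fin 2 × Bool) →₀ ℕ) :
    k = φk (k (0,false), k (0,true), k (1,false), k (1,true)) := by
  ext v
  obtain ⟨s, b⟩ := v
  fin_cases s <;> cases b <;> simp [φk, Finsupp.single_apply]

def Bbox (u : Bool →₀ ℕ) (N : ℕ) : Finset ((Fin 2 × Bool) →₀ ℕ) :=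
  Finset.image φk
    (range (u false + 1) ×ˢ range (N + 1) ×ˢ range (N + 1) ×ˢ range (u true + 1))

lemma not_mem_Bbox {u : Bool →₀ ℕ} {N : ℕ} {k : (Fin 2 × Bool) →₀ ℕ}
    (h : k ∉ Bbox u N) :
    ¬(k (0,false) ≤ u false ∧ k (0,true) ≤ N ∧ k (1,false) ≤ N ∧ k (1,true) ≤ u true) := by
  intro ⟨h1, h2, h3, h4⟩
  apply h
  refine Finset.mem_image.mpr ⟨(k (0,false), k (0,true), k (1,false), k (1,true)), ?_, (k_eq_φk k).symm⟩
  simp only [Finset.mem_product, Finset.mem_range]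
  exact ⟨by omega, by omega, by omega, by omega⟩
/-! ### The value of a single term -/

lemma nat_cast_smul (c : ℕ) (P : Kt) : (c : Kt) * P = (c : ℚ) • P := by
  rw [PowerSeries.smul_eq_C_mul, ← map_natCast (PowerSeries.C (R := ℚ)) c]

lemma neg_one_pow_smul (j : ℕ) (P : Kt) : (-1 : Kt) ^ j * P = ((-1 : ℚ) ^ j) • P := by
  rw [PowerSeries.smul_eq_C_mul, map_pow, map_neg, map_one]

lemma mul_nat_cast_smul (c : ℕ) (P : Kt) : P * (c : Kt) = (c : ℚ) • P := by
  rw [mul_comm, nat_cast_smul]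

lemma mul_neg_one_pow_smul (j : ℕ) (P : Kt) : P * (-1 : Kt) ^ j = ((-1 : ℚ) ^ j) • P := by
  rw [mul_comm, neg_one_pow_smul]

def Ψ (n b d e : ℕ) : Kt :=
  (((e.factorial * e.factorial * (n - e).factorial : ℕ) : ℚ))⁻¹ •
    ((-1 : Kt) ^ e * (b.factorial : Kt) * (d.factorial : Kt) * (n.choose b : Kt) *
      (e.choose d : Kt) * ((Tser - 1) ^ n * (-Tser) ^ b * (1 + Tser ^ 2) ^ d))

lemma scalarQ (a b c d e : ℕ) (h1 : a + c = b + d) (h2 : a ≤ e) (h3 : d ≤ e)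
    (h4 : e ≤ a + c) :
    (↑(a.factorial * b.factorial * c.factorial * d.factorial) : ℚ) *
      ((↑(2 * (a + c) + e).factorial)⁻¹ *
        ((-1) ^ e * (-1) ^ (a + c) * ↑((a + c).choose e) *
            (↑((a + c).choose b) * ((-1) ^ a * (-1) ^ (a + c) * ↑((a + c).choose a)) *
                  ↑(e.choose a) * ↑((a + c + e).choose (a + c)) * ↑(e.choose d)) *
          ↑((2 * (a + c) + e).choose (a + c + e)))) =
    (↑(e.factorial * e.factorial * (a + c - e).factorial) : ℚ)⁻¹ *
        (↑b.factorial * ↑d.factorial * ↑((a + c).choose b) * ↑(e.choose d) * (-1) ^ e) *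
      (↑(e.choose a) * (-1) ^ a) := by
  have nz : ∀ m : ℕ, ((m.factorial : ℚ)) ≠ 0 := fun m => Nat.cast_ne_zero.mpr m.factorial_ne_zero
  rw [Nat.cast_choose ℚ h4, Nat.cast_choose ℚ (show b ≤ a + c by omega),
    Nat.cast_choose ℚ (show a ≤ a + c by omega), Nat.cast_choose ℚ h2,
    Nat.cast_choose ℚ (show a + c ≤ a + c + e by omega), Nat.cast_choose ℚ h3,
    Nat.cast_choose ℚ (show a + c + e ≤ 2 * (a + c) + e by omega)]
  rw [show a + c - a = c by omega, show a + c - b = d by omega,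
    show a + c + e - (a + c) = e by omega, show 2 * (a + c) + e - (a + c + e) = a + c by omega]
  rcases Nat.even_or_odd (a + c) with hp | hp
  · rw [hp.neg_one_pow]
    push_cast
    field_simp
  · rw [hp.neg_one_pow]
    push_cast
    field_simp

lemma term_value {k : (Fin 2 × Bool) →₀ ℕ} {u : Bool →₀ ℕ} (hC : Cond k u) :
    (mfact k : ℚ) • val k u
      = ((-1 : Kt) ^ (k (0,false)) * ((u false).choose (k (0,false)) : Kt)) *
        Ψ (k (0,false) + k (1,false)) (k (0,true)) (k (1,true)) (u false) := by
  obtain ⟨hc1, hc2, hc3, hc4, hc5⟩ := hC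
  unfold val rr rU rV Ψ
  rw [mfact_eq, ← hc5]
  rw [show (k (0,false) + k (1,false)) + u false - (k (0,false) + k (1,false)) = u false by omega]
  rw [show 2*(k (0,false) + k (1,false)) + u false - ((k (0,false) + k (1,false)) + u false)
      = k (0,false) + k (1,false) by omega]
  rw [show (k (0,false) + k (1,false)) - k (0,true) = k (1,true) by omega]
  rw [neg_one_pow_sub (show k (0,false) ≤ k (0,false) + k (1,false) by omega)]
  rw [neg_one_pow_sub (show u false ≤ k (0,false) + k (1,false) from hc4)]
  rw [Nat.choose_symm (hc5 ▸ hc3)]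
  simp only [nat_cast_smul, neg_one_pow_smul, mul_nat_cast_smul, mul_neg_one_pow_smul,
    smul_mul_assoc, mul_smul_comm, smul_smul]
  congr 1
  · exact scalarQ _ _ _ _ _ hc1 hc2 (by omega) hc4
  · ring
/-! ### Summation over the box -/

open Classical in
noncomputable def TV (k : (Fin 2 × Bool) →₀ ℕ) (u : Bool →₀ ℕ) : Kt :=
  (mfact k : ℚ) • (if Cond k u then val k u else 0)

open Classical in
lemma TV_zero_of_not {k : (Fin 2 × Bool) →₀ ℕ} {u : Bool →₀ ℕ} (h : ¬ Cond k u) :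
    TV k u = 0 := by
  rw [TV, if_neg h, smul_zero]

open Classical in
lemma TV_pos {k : (Fin 2 × Bool) →₀ ℕ} {u : Bool →₀ ℕ} (hC : Cond k u) :
    TV k u = ((-1 : Kt) ^ (k (0,false)) * ((u false).choose (k (0,false)) : Kt)) *
      Ψ (k (0,false) + k (1,false)) (k (0,true)) (k (1,true)) (u false) := by
  rw [TV, if_pos hC]
  exact term_value hC

lemma Ψ_diag (m : ℕ) : Ψ m m 0 0 = (Tser - Tser ^ 2) ^ m := by
  unfold Ψ
  simp only [Nat.choose_self, Nat.factorial_zero, pow_zero, Nat.sub_zero, Nat.cast_one,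
    one_mul, mul_one]
  rw [nat_cast_smul, smul_smul]
  rw [inv_mul_cancel₀ (Nat.cast_ne_zero.mpr m.factorial_ne_zero), one_smul]
  rw [← mul_pow, show (Tser - 1) * (-Tser) = Tser - Tser ^ 2 by ring]

lemma TV_coeff_high {k : (Fin 2 × Bool) →₀ ℕ} {u : Bool →₀ ℕ} {N : ℕ} (hC : Cond k u)
    (h : N < k (0,false) + k (1,false)) :
    PowerSeries.coeff (R := ℚ) N (TV k u) = 0 := by
  rw [TV_pos hC]
  obtain ⟨g, hg⟩ : ∃ g : Kt, ((-1 : Kt) ^ (k (0,false)) * ((u false).choose (k (0,false)) : Kt)) *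
      Ψ (k (0,false) + k (1,false)) (k (0,true)) (k (1,true)) (u false)
        = (Tser - 1) ^ (k (0,false) + k (1,false)) * g := by
    refine ⟨((-1 : Kt) ^ (k (0,false)) * ((u false).choose (k (0,false)) : Kt)) *
      ((((u false).factorial * (u false).factorial *
        (k (0,false) + k (1,false) - u false).factorial : ℕ) : ℚ))⁻¹ •
        ((-1 : Kt) ^ (u false) * ((k (0,true)).factorial : Kt) * ((k (1,true)).factorial : Kt) *
          (((k (0,false) + k (1,false)).choose (k (0,true))) : Kt) *
          (((u false).choose (k (1,true))) : Kt) *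
          ((-Tser) ^ (k (0,true)) * (1 + Tser ^ 2) ^ (k (1,true)))), ?_⟩
    unfold Ψ
    simp only [smul_mul_assoc, mul_smul_comm]
    congr 1
    ring
  rw [hg]
  exact coeff_w_pow_mul g h

lemma Cond_φk (a b c d : ℕ) (u : Bool →₀ ℕ) :
    Cond (φk (a,b,c,d)) u ↔
      (a + c = b + d ∧ a ≤ u false ∧ d ≤ u true ∧ u false ≤ a + c ∧ u false = u true) := by
  obtain ⟨p1, p2, p3, p4⟩ := φk_apply (a,b,c,d)
  unfold Cond
  rw [p1, p2, p3, p4]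

lemma TV_pos_φk {a b c d : ℕ} {u : Bool →₀ ℕ}
    (hC : Cond (φk (a,b,c,d)) u) :
    TV (φk (a,b,c,d)) u
      = ((-1 : Kt) ^ a * ((u false).choose a : Kt)) * Ψ (a + c) b d (u false) := by
  obtain ⟨p1, p2, p3, p4⟩ := φk_apply (a,b,c,d)
  rw [TV_pos hC, p1, p2, p3, p4]
/-! ### The full box sum -/

open Classical in
lemma outer (u : Bool →₀ ℕ) (N : ℕ) :
    ∑ k ∈ Bbox u N, PowerSeries.coeff (R := ℚ) N (TV k u)
      = PowerSeries.coeff (R := ℚ) N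
          (if u = (0 : Bool →₀ ℕ) then (1 - Tser + Tser ^ 2)⁻¹ else 0) := by
  unfold Bbox
  rw [Finset.sum_image (fun x _ y _ h => by
    obtain ⟨a, b, c, d⟩ := x
    obtain ⟨a', b', c', d'⟩ := y
    obtain ⟨p1, p2, p3, p4⟩ := φk_apply (a, b, c, d)
    obtain ⟨q1, q2, q3, q4⟩ := φk_apply (a', b', c', d')
    have e1 := DFunLike.congr_fun h ((0 : Fin 2), false)
    have e2 := DFunLike.congr_fun h ((0 : Fin 2), true)
    have e3 := DFunLike.congr_fun h ((1 : Fin 2), false)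
    have e4 := DFunLike.congr_fun h ((1 : Fin 2), true)
    rw [p1, q1] at e1; rw [p2, q2] at e2; rw [p3, q3] at e3; rw [p4, q4] at e4
    simp only [Prod.mk.injEq]
    exact ⟨e1, e2, e3, e4⟩)]
  simp only [Finset.sum_product]
  by_cases hu : u = (0 : Bool →₀ ℕ)
  · subst hu
    simp only [Finsupp.coe_zero, Pi.zero_apply, zero_add, Finset.sum_range_one]
    rw [if_pos (by trivial)]
    have hcol : ∀ b ∈ range (N + 1),
        (∑ c ∈ range (N + 1),
            PowerSeries.coeff (R := ℚ) N (TV (φk (0, b, c, 0)) (0 : Bool →₀ ℕ)))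
          = PowerSeries.coeff (R := ℚ) N ((Tser - Tser ^ 2) ^ b) := by
      intro b hb
      rw [Finset.sum_eq_single_of_mem b hb (fun c _ hcb => by
        rw [TV_zero_of_not (fun hC => hcb (by
          have := ((Cond_φk _ _ _ _ _).mp hC).1
          omega)), map_zero])]
      have hC : Cond (φk (0, b, b, 0)) (0 : Bool →₀ ℕ) :=
        (Cond_φk _ _ _ _ _).mpr (by
          simp only [Finsupp.coe_zero, Pi.zero_apply]
          exact ⟨by omega, by omega, by omega, by omega, by trivial⟩)
      rw [TV_pos_φk hC]
      simp only [pow_zero, Finsupp.coe_zero, Pi.zero_apply, Nat.choose_self, Nat.cast_one,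
        one_mul, zero_add, Ψ_diag]
    rw [Finset.sum_congr rfl hcol, ← map_sum, geom_partial]
  · rw [if_neg hu]
    by_cases he : u false = u true
    · have he1 : 1 ≤ u false := by
        rcases Nat.eq_zero_or_pos (u false) with h0 | h
        · exact absurd (Finsupp.ext fun b => by
            cases b
            · simpa using h0
            · simpa using he ▸ h0) hu
        · exact h
      rw [map_zero]
      rw [Finset.sum_comm]
      refine Finset.sum_eq_zero fun b hb => ?_
      rw [Finset.sum_congr rfl fun a _ => Finset.sum_comm, Finset.sum_comm]
      refine Finset.sum_eq_zero fun d hd => ?_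
      have hdd : d ≤ u true := by simpa [Nat.lt_succ_iff] using hd
      by_cases hbd : b + d ≤ N ∧ u false ≤ b + d
      · have hstep : ∀ a ∈ range (u false + 1),
            (∑ c ∈ range (N + 1), PowerSeries.coeff (R := ℚ) N (TV (φk (a, b, c, d)) u))
              = PowerSeries.coeff (R := ℚ) N
                  (((-1 : Kt) ^ a * ((u false).choose a : Kt)) * Ψ (b + d) b d (u false)) := by
          intro a ha
          have haa : a ≤ u false := by simpa [Nat.lt_succ_iff] using ha
          rw [Finset.sum_eq_single_of_mem (b + d - a)
            (by simp only [Finset.mem_range]; omega)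
            (fun c _ hcb => by
              rw [TV_zero_of_not (fun hC => hcb (by
                have := ((Cond_φk _ _ _ _ _).mp hC).1
                omega)), map_zero])]
          have hC : Cond (φk (a, b, b + d - a, d)) u :=
            (Cond_φk _ _ _ _ _).mpr ⟨by omega, haa, hdd, by omega, he⟩
          rw [TV_pos_φk hC, show a + (b + d - a) = b + d by omega]
        rw [Finset.sum_congr rfl hstep, ← map_sum, ← Finset.sum_mul,
          alt_sum_choose_Kt (by omega), zero_mul, map_zero]
      · refine Finset.sum_eq_zero fun a _ => Finset.sum_eq_zero fun c _ => ?_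
        by_cases hC : Cond (φk (a, b, c, d)) u
        · have h5 := (Cond_φk _ _ _ _ _).mp hC
          have p1' : (φk (a, b, c, d)) (0, false) = a := (φk_apply _).1
          have p3' : (φk (a, b, c, d)) (1, false) = c := (φk_apply _).2.2.1
          exact TV_coeff_high hC (by omega)
        · rw [TV_zero_of_not hC, map_zero]
    · rw [map_zero]
      refine Finset.sum_eq_zero fun a _ => Finset.sum_eq_zero fun b _ =>
        Finset.sum_eq_zero fun c _ => Finset.sum_eq_zero fun d _ => ?_
      rw [TV_zero_of_not (fun hC => he ((Cond_φk _ _ _ _ _).mp hC).2.2.2.2), map_zero]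
/-! ### Final assembly -/

open Classical in
lemma TV_out {u : Bool →₀ ℕ} {N : ℕ} {k : (Fin 2 × Bool) →₀ ℕ} (h : k ∉ Bbox u N) :
    PowerSeries.coeff (R := ℚ) N (TV k u) = 0 := by
  have hb := not_mem_Bbox h
  by_cases hC : Cond k u
  · have hC' := hC
    obtain ⟨hc1, hc2, hc3, hc4, hc5⟩ := hC'
    exact TV_coeff_high hC (by omega)
  · rw [TV_zero_of_not hC, map_zero]

lemma smul_apply' (q : ℚ) (F : MvPowerSeries Bool Kt) (u : Bool →₀ ℕ) :
    (q • F) u = q • (F u) := rfl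

open Classical in
lemma summand_eq (k : (Fin 2 × Bool) →₀ ℕ) (u : Bool →₀ ℕ) :
    ((mfact k : ℚ) • sliceC k (expK E9)) u = TV k u := by
  rw [smul_apply']
  unfold TV
  congr 1
  rw [← coeff_expK_E9 k u]
  rfl

lemma Kt_apply (g : Kt) (n : Unit →₀ ℕ) : g n = PowerSeries.coeff (R := ℚ) (n ()) g := by
  conv_lhs => rw [Finsupp.unique_single n]
  rfl
open Classical in
lemma target_eq (u : Bool →₀ ℕ) (n : Unit →₀ ℕ) :
    (MvPowerSeries.C (σ := Bool) (R := Kt) ((1 - Tser + Tser ^ 2)⁻¹)) u n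
      = PowerSeries.coeff (R := ℚ) (n ())
          (if u = (0 : Bool →₀ ℕ) then (1 - Tser + Tser ^ 2)⁻¹ else 0) := by
  have h1 : (MvPowerSeries.C (σ := Bool) (R := Kt) ((1 - Tser + Tser ^ 2)⁻¹)) u
      = (if u = (0 : Bool →₀ ℕ) then (1 - Tser + Tser ^ 2)⁻¹ else 0) := by
    have : (MvPowerSeries.C (σ := Bool) (R := Kt) ((1 - Tser + Tser ^ 2)⁻¹)) u
        = MvPowerSeries.coeff (R := Kt) u (MvPowerSeries.C (σ := Bool) (R := Kt) ((1 - Tser + Tser ^ 2)⁻¹)) := rfl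
    rw [this, MvPowerSeries.coeff_C]
  rw [h1]
  exact Kt_apply _ n

end Trefoil

open Trefoil in
/-- The universal Heisenberg-algebra invariant of the (long) positive
trefoil equals the reciprocal of its Alexander polynomial: the contraction
`⟨e^{(T-1)(p_i-p_j)(-T x_i + (1+T²)x_j)} · e^{(π_i+π_j)p_0+(ξ_i+ξ_j)x_0-ξ_iπ_j}⟩`
over the pairs indexed by `i` and `j` converges to the constant `1/(1-T+T²)`. -/
theorem trefoil_heisenberg_invariant :
    letI : TopologicalSpace (MvPowerSeries Bool Kt) := outTop
    HasSum (fun k : (Fin 2 × Bool) →₀ ℕ => (mfact k : ℚ) • sliceC k (expK E9))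
      (MvPowerSeries.C (σ := Bool) (R := Kt) ((1 - Tser + Tser ^ 2)⁻¹)) := by
  letI : TopologicalSpace ℚ := ⊥
  letI : TopologicalSpace Kt := KtTop
  show @HasSum _ _ _ outTop _ _ _
  refine Pi.hasSum.mpr fun u => ?_
  refine Pi.hasSum.mpr fun n => ?_
  have base := hasSum_sum_of_ne_finset_zero (s := Bbox u (n ()))
    (f := fun k => PowerSeries.coeff (R := ℚ) (n ()) (TV k u)) (fun k hk => TV_out hk)
    (L := SummationFilter.unconditional _)
  rw [outer u (n ())] at base
  have hfun : (fun k : (Fin 2 × Bool) →₀ ℕ => ((mfact k : ℚ) • sliceC k (expK E9)) u n)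
      = fun k => PowerSeries.coeff (R := ℚ) (n ()) (TV k u) := by
    funext k
    rw [summand_eq]
    exact Kt_apply _ n
  rw [hfun, target_eq]
  exact base
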